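/- Let f be a real- or complex-valued function on (a, b] that is Riemann integrable on [c, b] for every c ∈ (a, b), and suppose the improper integral ∫_{a+}^b f exists. Suppose there is a monotone decreasing function M on (a, b] with |f(x)| ≤ M(x) for all x ∈ (a, b] and with finite improper integral ∫_{a+}^b M < ∞. For n ≥ 1 set a_{j,n} = a + j(b − a)/n for j = 0, …, n, and let ξ_{j,n} be any points with a_{j−1,n} ≤ ξ_{j,n} ≤ a_{j,n}. Then the modified equidistant Riemann sums obtained by omitting the initial summand, namely ((b − a)/n) Σ_{j=2}^n f(ξ_{j,n}), converge to ∫_{a+}^b f as n → ∞. -/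

import Mathlib

open MeasureTheory Filter Set intervalIntegral
open scoped Real Topology

/-- `f` is Riemann integrable on `[a,b]`: bounded there and (by Lebesgue's criterion)
continuous at almost every point of `[a,b]`.  For such functions the Riemann integral
coincides with the Lebesgue integral `∫ x in a..b, f x`. -/
def RiemannIntegrableOn (f : ℝ → ℂ) (a b : ℝ) : Prop :=
  (∃ M : ℝ, ∀ x ∈ Set.Icc a b, ‖f x‖ ≤ M) ∧
    ∀ᵐ x ∂(volume.restrict (Set.Icc a b)), ContinuousWithinAt f (Set.Icc a b) x

/-- Lemma 2: if `f` is Riemann integrable on `[c,b]` for every `c ∈ (a,b)`, the improper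
integral `∫_{a+}^b f = L` exists, and `|f|` is dominated on `(a,b]` by a monotone
decreasing function `M` with finite improper integral, then the equidistant Riemann
sums of `f` modified by omission of the initial summand converge to `L`. -/
theorem modified_riemann_sums_tendsto
    (a b : ℝ) (hab : a < b) (f : ℝ → ℂ) (L : ℂ)
    (hRiem : ∀ c ∈ Set.Ioo a b, RiemannIntegrableOn f c b)
    (hL : Tendsto (fun c : ℝ => ∫ x in c..b, f x) (nhdsWithin a (Set.Ioi a)) (nhds L))
    (M : ℝ → ℝ) (hManti : AntitoneOn M (Set.Ioc a b))
    (hMmaj : ∀ x ∈ Set.Ioc a b, ‖f x‖ ≤ M x)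
    (hMfin : ∃ K : ℝ,
      Tendsto (fun c : ℝ => ∫ x in c..b, M x) (nhdsWithin a (Set.Ioi a)) (nhds K))
    (ξ : ℕ → ℕ → ℝ)
    (hξ : ∀ n : ℕ, ∀ j ∈ Finset.Icc 1 n,
      ξ n j ∈ Set.Icc (a + (j - 1 : ℝ) * (b - a) / n) (a + (j : ℝ) * (b - a) / n)) :
    Tendsto
      (fun n : ℕ => (((b - a) / n : ℝ) : ℂ) * ∑ j ∈ Finset.Icc 2 n, f (ξ n j))
      atTop (nhds L) := by
  classical
  obtain ⟨K, hK⟩ := hMfin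
  have hba : (0 : ℝ) < b - a := sub_pos.2 hab
  set μ := volume.restrict (Set.Ioc a b) with hμ
  set I : ℕ → ℕ → Set ℝ :=
    fun n j => Set.Ioc (a + ((j : ℝ) - 1) * (b - a) / n) (a + (j : ℝ) * (b - a) / n) with hIdef
  set N : ℝ → ℝ := fun x => M ((x + a) / 2) with hNdef
  set g : ℕ → ℝ → ℂ :=
    fun n x => ∑ j ∈ Finset.Icc 2 n, (I n j).indicator (fun _ => f (ξ n j)) x with hgdef
  set c : ℕ → ℝ := fun k => a + (b - a) / (k + 2) with hcdef
  -- basic facts about c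
  have hc_mem : ∀ k, c k ∈ Set.Ioo a b := by
    intro k
    have h2 : (0:ℝ) < (k:ℝ) + 2 := by positivity
    constructor
    · simp only [hcdef, lt_add_iff_pos_right]; positivity
    · have : (b - a) / ((k:ℝ) + 2) < b - a := by
        apply div_lt_self hba
        have := Nat.cast_nonneg (α := ℝ) k; linarith
      simp only [hcdef]; linarith
  have hc_tendsto : Tendsto c atTop (nhdsWithin a (Set.Ioi a)) := by
    apply tendsto_nhdsWithin_of_tendsto_nhds_of_eventually_within
    · have h0 : Tendsto (fun k : ℕ => (b - a) / ((k:ℝ) + 2)) atTop (nhds 0) := by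
        have h1 := (tendsto_const_div_atTop_nhds_zero_nat (b - a)).comp (tendsto_add_atTop_nat 2)
        have h2 : (fun k : ℕ => (b - a) / ((k:ℝ) + 2))
            = (fun n : ℕ => (b - a) / (n:ℝ)) ∘ (fun k => k + 2) := by
          funext k; simp only [Function.comp]; push_cast; ring_nf
        rw [h2]; exact h1
      have := tendsto_const_nhds.add h0 (x := atTop) (f := fun _ : ℕ => a)
      simpa using this
    · exact Eventually.of_forall fun k => (hc_mem k).1
  -- grid lemmas
  have hlen : ∀ (n j : ℕ), (a + (j : ℝ) * (b - a) / n) - (a + ((j : ℝ) - 1) * (b - a) / n)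
      = (b - a) / n := by intro n j; ring
  have hunique : ∀ (n : ℕ), 0 < n → ∀ (x : ℝ) (i j : ℕ), x ∈ I n i → x ∈ I n j → i = j := by
    intro n hn x i j hi hj
    have hpos : (0:ℝ) < (b - a) / n := by positivity
    have key : ∀ p q : ℕ, x ∈ I n p → x ∈ I n q → p ≤ q := by
      intro p q hp hq
      have h1 : ((p : ℝ) - 1) * (b - a) / n < x - a := by
        have := hp.1; linarith
      have h2 : x - a ≤ (q : ℝ) * (b - a) / n := by
        have := hq.2; linarith
      have h3 : ((p : ℝ) - 1) * ((b - a) / n) < (q : ℝ) * ((b - a) / n) := by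
        calc ((p : ℝ) - 1) * ((b - a) / n) = ((p : ℝ) - 1) * (b - a) / n := by ring
        _ < x - a := h1
        _ ≤ (q : ℝ) * (b - a) / n := h2
        _ = (q : ℝ) * ((b - a) / n) := by ring
      have h4 : ((p : ℝ) - 1) < (q : ℝ) := lt_of_mul_lt_mul_right (by linarith [h3]) hpos.le
      have : (p : ℝ) < (q : ℝ) + 1 := by linarith
      exact_mod_cast Nat.lt_succ_iff.mp (by exact_mod_cast this)
    exact le_antisymm (key i j hi hj) (key j i hj hi)
  have hexists : ∀ (n : ℕ), 0 < n → ∀ x ∈ Set.Ioc a b,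
      ∃ j : ℕ, 1 ≤ j ∧ j ≤ n ∧ x ∈ I n j := by
    intro n hn x hx
    have hnR : (0:ℝ) < n := by exact_mod_cast hn
    have ht0 : (0:ℝ) < (x - a) * n / (b - a) := by
      have : (0:ℝ) < x - a := sub_pos.2 hx.1
      positivity
    set t : ℝ := (x - a) * n / (b - a) with htdef
    have hpos : (0:ℝ) < (b - a) / n := by positivity
    have heq : t * ((b - a) / n) = x - a := by
      rw [htdef]; field_simp
    refine ⟨⌈t⌉₊, Nat.ceil_pos.2 ht0, Nat.ceil_le.2 ?_, ?_, ?_⟩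
    · rw [htdef, div_le_iff₀ hba]
      have hxb := hx.2
      nlinarith
    · have hlt : ((⌈t⌉₊ : ℝ) - 1) < t := by linarith [Nat.ceil_lt_add_one ht0.le]
      have h1 : ((⌈t⌉₊ : ℝ) - 1) * ((b - a) / n) < t * ((b - a) / n) :=
        mul_lt_mul_of_pos_right hlt hpos
      have e1 : ((⌈t⌉₊ : ℝ) - 1) * (b - a) / n = ((⌈t⌉₊ : ℝ) - 1) * ((b - a) / n) := by ring
      show a + ((⌈t⌉₊ : ℝ) - 1) * (b - a) / n < x
      linarith [h1.trans_eq heq, e1]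
    · have hle : t ≤ (⌈t⌉₊ : ℝ) := Nat.le_ceil t
      have h1 : t * ((b - a) / n) ≤ (⌈t⌉₊ : ℝ) * ((b - a) / n) :=
        mul_le_mul_of_nonneg_right hle hpos.le
      have e1 : (⌈t⌉₊ : ℝ) * (b - a) / n = (⌈t⌉₊ : ℝ) * ((b - a) / n) := by ring
      show x ≤ a + (⌈t⌉₊ : ℝ) * (b - a) / n
      linarith [heq.symm.trans_le h1, e1]
  -- subset lemma
  have hsub : ∀ n j : ℕ, 1 ≤ j → j ≤ n → I n j ⊆ Set.Ioc a b := by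
    intro n j h1 h2
    have hnR : (0:ℝ) < n := by exact_mod_cast lt_of_lt_of_le h1 h2
    apply Set.Ioc_subset_Ioc
    · have : (0:ℝ) ≤ ((j:ℝ) - 1) * (b - a) / n := by
        have : (1:ℝ) ≤ (j:ℝ) := by exact_mod_cast h1
        have h3 : (0:ℝ) ≤ (j:ℝ) - 1 := by linarith
        positivity
      linarith
    · have hj : (j:ℝ) ≤ n := by exact_mod_cast h2
      have : (j:ℝ) * (b - a) / n ≤ b - a := by
        rw [div_le_iff₀ hnR]; nlinarith
      linarith
  have hIeq : ∀ n j : ℕ,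
      I n j = Set.Ioc (a + ((j:ℝ) - 1) * (b - a) / n) (a + (j:ℝ) * (b - a) / n) :=
    fun n j => rfl
  clear_value I N g c
  -- interval integrability of M on subintervals of (a, b]
  have hMint : ∀ u v : ℝ, a < u → u ≤ v → v ≤ b → IntervalIntegrable M volume u v := by
    intro u v hu huv hvb
    apply AntitoneOn.intervalIntegrable
    apply hManti.mono
    rw [Set.uIcc_of_le huv]
    intro z hz
    exact ⟨lt_of_lt_of_le hu hz.1, le_trans hz.2 hvb⟩
  -- nonnegativity of M on (a, b]
  have hM0 : ∀ x ∈ Set.Ioc a b, 0 ≤ M x := fun x hx => le_trans (norm_nonneg _) (hMmaj x hx)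
  -- bound on partial integrals of M
  have hF : ∀ u ∈ Set.Ioo a b, ∫ x in u..b, M x ≤ K := by
    intro u hu
    apply ge_of_tendsto hK
    filter_upwards [Ioo_mem_nhdsGT_of_mem (Set.left_mem_Ico.2 hu.1)] with v hv
    have h1 : IntervalIntegrable M volume v u := hMint v u hv.1 hv.2.le hu.2.le
    have h2 : IntervalIntegrable M volume u b := hMint u b hu.1 hu.2.le le_rfl
    rw [← intervalIntegral.integral_add_adjacent_intervals h1 h2]
    have h3 : 0 ≤ ∫ x in v..u, M x := by
      apply intervalIntegral.integral_nonneg hv.2.le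
      intro z hz
      exact hM0 z ⟨lt_of_lt_of_le hv.1 hz.1, le_trans hz.2 hu.2.le⟩
    linarith
  -- the AECover
  have hcov : AECover μ atTop (fun k => Set.Ioc (c k) b) := by
    constructor
    · filter_upwards [ae_restrict_mem measurableSet_Ioc] with x hx
      have : ∀ᶠ k in atTop, c k < x :=
        (hc_tendsto.mono_right nhdsWithin_le_nhds).eventually_lt_const hx.1
      filter_upwards [this] with k hk
      exact ⟨hk, hx.2⟩
    · intro k; exact measurableSet_Ioc
  -- facts about N
  have hhalf_mem : ∀ x ∈ Set.Ioc a b, (x + a) / 2 ∈ Set.Ioc a b := by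
    intro x hx
    constructor
    · have := hx.1; linarith
    · have := hx.2; linarith
  have hN0 : ∀ x ∈ Set.Ioc a b, 0 ≤ N x := by
    intro x hx; simp only [hNdef]; exact hM0 _ (hhalf_mem x hx)
  have hMN : ∀ x ∈ Set.Ioc a b, M x ≤ N x := by
    intro x hx
    simp only [hNdef]
    exact hManti (hhalf_mem x hx) hx (by linarith [hx.1])
  have hNanti : AntitoneOn N (Set.Ioc a b) := by
    intro x hx y hy hxy
    simp only [hNdef]
    exact hManti (hhalf_mem x hx) (hhalf_mem y hy) (by linarith)
  have hNIoc : ∀ u, a < u → IntegrableOn N (Set.Ioc u b) volume := by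
    intro u hu
    rcases le_or_gt u b with hub | hub
    · apply IntegrableOn.mono_set _ Set.Ioc_subset_Icc_self
      apply AntitoneOn.integrableOn_isCompact isCompact_Icc
      apply hNanti.mono
      intro z hz
      exact ⟨lt_of_lt_of_le hu hz.1, hz.2⟩
    · rw [Set.Ioc_eq_empty (by linarith)]
      exact integrableOn_empty
  have hN_int : Integrable N μ := by
    apply hcov.integrable_of_integral_norm_bounded (2 * K)
    · intro k
      rw [hμ, IntegrableOn, Measure.restrict_restrict measurableSet_Ioc]
      have : Set.Ioc (c k) b ∩ Set.Ioc a b = Set.Ioc (c k) b := by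
        apply Set.inter_eq_self_of_subset_left
        intro z hz
        exact ⟨lt_of_lt_of_le (hc_mem k).1 hz.1.le, hz.2⟩
      rw [this]
      exact hNIoc (c k) (hc_mem k).1
    · apply Eventually.of_forall
      intro k
      have hck := hc_mem k
      have hinter : Set.Ioc (c k) b ∩ Set.Ioc a b = Set.Ioc (c k) b := by
        apply Set.inter_eq_self_of_subset_left
        intro z hz
        exact ⟨lt_of_lt_of_le hck.1 hz.1.le, hz.2⟩
      rw [hμ, Measure.restrict_restrict measurableSet_Ioc, hinter]
      have h1 : ∫ x in Set.Ioc (c k) b, ‖N x‖ = ∫ x in Set.Ioc (c k) b, N x := by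
        apply setIntegral_congr_fun measurableSet_Ioc
        intro z hz
        exact Real.norm_of_nonneg (hN0 z ⟨lt_of_lt_of_le hck.1 hz.1.le, hz.2⟩)
      rw [h1, ← intervalIntegral.integral_of_le hck.2.le]
      -- change of variables
      have h2 : ∫ x in (c k)..b, N x = ∫ x in (c k)..b, M (2⁻¹ * x + a / 2) := by
        apply intervalIntegral.integral_congr
        intro z _
        simp only [hNdef]
        ring_nf
      rw [h2, intervalIntegral.integral_comp_mul_add M (by norm_num : (2⁻¹:ℝ) ≠ 0) (a / 2)]
      have e1 : 2⁻¹ * (c k) + a / 2 = (c k + a) / 2 := by ring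
      have e2 : 2⁻¹ * b + a / 2 = (b + a) / 2 := by ring
      rw [e1, e2]
      set u : ℝ := (c k + a) / 2 with hu
      set m : ℝ := (b + a) / 2 with hm
      clear_value u m
      have hck1 : a < c k := hck.1
      have hck2 : c k < b := hck.2
      have hau : a < u := by rw [hu]; nlinarith [hck1]
      have hum : u ≤ m := by rw [hu, hm]; nlinarith [hck2]
      have hmb : m ≤ b := by rw [hm]; linarith
      have hmba : a < m := by rw [hm]; linarith
      have key : ∫ x in u..m, M x ≤ K := by
        have h3 : IntervalIntegrable M volume u m := hMint u m hau hum hmb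
        have h4 : IntervalIntegrable M volume m b := hMint m b hmba hmb le_rfl
        have h5 : 0 ≤ ∫ x in m..b, M x := by
          apply intervalIntegral.integral_nonneg hmb
          intro z hz
          exact hM0 z ⟨lt_of_lt_of_le hmba hz.1, hz.2⟩
        have h6 := hF u ⟨hau, lt_of_le_of_lt hum (lt_of_le_of_lt (le_refl m) (lt_of_le_of_ne hmb (by rw [hm]; intro hcon; linarith)))⟩
        rw [← intervalIntegral.integral_add_adjacent_intervals h3 h4] at h6
        linarith
      have hKnn : 0 ≤ ∫ x in u..m, M x := by
        apply intervalIntegral.integral_nonneg hum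
        intro z hz
        exact hM0 z ⟨lt_of_lt_of_le hau hz.1, le_trans hz.2 hmb⟩
      rw [smul_eq_mul]
      norm_num
      linarith
  -- a.e. continuity of f on (a, b]
  have hbad : ∀ u ∈ Set.Ioo a b, volume {x | x ∈ Set.Ioo u b ∧ ¬ ContinuousAt f x} = 0 := by
    intro u hu
    have h1 := (hRiem u hu).2
    rw [ae_restrict_iff' measurableSet_Icc] at h1
    rw [ae_iff] at h1
    apply measure_mono_null _ h1
    intro x hx
    simp only [Set.mem_setOf_eq] at hx ⊢
    intro hcon
    exact hx.2 ((hcon ⟨hx.1.1.le, hx.1.2.le⟩).continuousAt (Icc_mem_nhds hx.1.1 hx.1.2))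
  have hnull : volume {x | ¬ (x ∈ Set.Ioc a b → ContinuousAt f x)} = 0 := by
    have hcover : {x | ¬ (x ∈ Set.Ioc a b → ContinuousAt f x)}
        ⊆ {b} ∪ ⋃ k, {x | x ∈ Set.Ioo (c k) b ∧ ¬ ContinuousAt f x} := by
      intro x hx
      simp only [Set.mem_setOf_eq, Classical.not_imp] at hx
      obtain ⟨hx1, hx2⟩ := hx
      rcases eq_or_lt_of_le hx1.2 with hxb | hxb
      · exact Or.inl hxb
      · refine Or.inr (Set.mem_iUnion.2 ?_)
        have hev : ∀ᶠ k in atTop, c k < x :=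
          (hc_tendsto.mono_right nhdsWithin_le_nhds).eventually_lt_const hx1.1
        obtain ⟨k, hk⟩ := hev.exists
        exact ⟨k, ⟨⟨hk, hxb⟩, hx2⟩⟩
    exact measure_mono_null hcover
      (measure_union_null (measure_singleton b)
        (measure_iUnion_null fun k => hbad (c k) (hc_mem k)))
  have hae : ∀ᵐ x ∂μ, ContinuousAt f x := by
    rw [hμ, ae_restrict_iff' measurableSet_Ioc, ae_iff]
    exact hnull
  have hf_meas : AEStronglyMeasurable f μ := by
    set S : Set ℝ := {x | ContinuousAt f x} with hSdef
    have hS : MeasurableSet S := (IsGδ.setOf_continuousAt f).measurableSet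
    have hST : Set.Ioc a b =ᵐ[volume] ((Set.Ioc a b ∩ S : Set ℝ)) := by
      apply MeasureTheory.ae_eq_set.2
      constructor
      · apply measure_mono_null _ hnull
        intro z hz
        simp only [Set.mem_diff, Set.mem_inter_iff, Set.mem_setOf_eq, Classical.not_imp, not_and,
          hSdef] at hz ⊢
        exact ⟨hz.1, fun h => hz.2 hz.1 h⟩
      · have he : (Set.Ioc a b ∩ S) \ Set.Ioc a b = ∅ := by
          ext z
          simp only [Set.mem_diff, Set.mem_inter_iff, Set.mem_empty_iff_false, iff_false]
          tauto
        rw [he]; exact measure_empty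
    rw [hμ, Measure.restrict_congr_set hST]
    apply ContinuousOn.aestronglyMeasurable _ (measurableSet_Ioc.inter hS)
    intro x hx
    exact (hx.2 : ContinuousAt f x).continuousWithinAt
  -- integrability of f
  have hf_int : Integrable f μ := by
    apply hN_int.mono hf_meas
    filter_upwards [ae_restrict_mem measurableSet_Ioc] with x hx
    calc ‖f x‖ ≤ M x := hMmaj x hx
    _ ≤ N x := hMN x hx
    _ ≤ ‖N x‖ := le_abs_self _
  -- identification of the limit
  have hinter : ∀ k, Set.Ioc (c k) b ∩ Set.Ioc a b = Set.Ioc (c k) b := by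
    intro k
    apply Set.inter_eq_self_of_subset_left
    intro z hz
    exact ⟨lt_of_lt_of_le (hc_mem k).1 hz.1.le, hz.2⟩
  have hL_eq : ∫ x, f x ∂μ = L := by
    have t1 : Tendsto (fun k => ∫ x in Set.Ioc (c k) b, f x ∂μ) atTop
        (nhds (∫ x, f x ∂μ)) := hcov.integral_tendsto_of_countably_generated hf_int
    have t2 : ∀ k, ∫ x in Set.Ioc (c k) b, f x ∂μ = ∫ x in (c k)..b, f x := by
      intro k
      rw [hμ, Measure.restrict_restrict measurableSet_Ioc, hinter k,
        intervalIntegral.integral_of_le (hc_mem k).2.le]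
    rw [funext t2] at t1
    exact tendsto_nhds_unique t1 (hL.comp hc_tendsto)
  -- measurability of g
  have hgmeas : ∀ n, AEStronglyMeasurable (g n) μ := by
    intro n
    simp only [hgdef]
    apply Finset.aestronglyMeasurable_fun_sum
    intro j _
    exact aestronglyMeasurable_const.indicator (by rw [hIeq]; exact measurableSet_Ioc)
  -- domination of g by N
  have hgbound : ∀ n, ∀ᵐ x ∂μ, ‖g n x‖ ≤ N x := by
    intro n
    filter_upwards [ae_restrict_mem measurableSet_Ioc] with x hx
    simp only [hgdef]
    by_cases hex : ∃ j, j ∈ Finset.Icc 2 n ∧ x ∈ I n j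
    · obtain ⟨j, hjmem, hxj⟩ := hex
      rw [Finset.mem_Icc] at hjmem
      have hn0 : 0 < n := lt_of_lt_of_le (by norm_num) (le_trans hjmem.1 hjmem.2)
      have hsum : (∑ i ∈ Finset.Icc 2 n, (I n i).indicator (fun _ => f (ξ n i)) x)
          = f (ξ n j) := by
        rw [Finset.sum_eq_single_of_mem j (Finset.mem_Icc.2 hjmem)
          (fun i hi hne =>
            Set.indicator_of_notMem (fun hxi => hne (hunique n hn0 x i j hxi hxj)) _)]
        exact Set.indicator_of_mem hxj _
      rw [hsum]
      have hjI := hξ n j (Finset.mem_Icc.2 ⟨le_trans (by norm_num) hjmem.1, hjmem.2⟩)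
      have hnR : (0:ℝ) < n := by exact_mod_cast hn0
      have hjR : (2:ℝ) ≤ (j:ℝ) := by exact_mod_cast hjmem.1
      have hjn : (j:ℝ) ≤ (n:ℝ) := by exact_mod_cast hjmem.2
      rw [hIeq] at hxj
      have hxu : x ≤ a + (j:ℝ) * (b - a) / n := hxj.2
      have hξl : a + ((j:ℝ) - 1) * (b - a) / n ≤ ξ n j := hjI.1
      have hξu : ξ n j ≤ a + (j:ℝ) * (b - a) / n := hjI.2
      have hpos : (0:ℝ) < (b - a) / n := by positivity
      have h2 : (j:ℝ) * ((b - a) / n) ≤ (2 * ((j:ℝ) - 1)) * ((b - a) / n) :=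
        mul_le_mul_of_nonneg_right (by linarith) hpos.le
      have e1 : (j:ℝ) * (b - a) / n = (j:ℝ) * ((b - a) / n) := by ring
      have e2 : ((j:ℝ) - 1) * (b - a) / n = ((j:ℝ) - 1) * ((b - a) / n) := by ring
      have hmid : (x + a) / 2 ≤ a + ((j:ℝ) - 1) * (b - a) / n := by
        linarith [hxu, h2, e1, e2]
      have h3 : (1:ℝ) * ((b - a) / n) ≤ ((j:ℝ) - 1) * ((b - a) / n) :=
        mul_le_mul_of_nonneg_right (by linarith) hpos.le
      have h4 : (j:ℝ) * ((b - a) / n) ≤ (n:ℝ) * ((b - a) / n) :=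
        mul_le_mul_of_nonneg_right hjn hpos.le
      have e3 : (n:ℝ) * ((b - a) / n) = b - a := by field_simp
      have hξmem : ξ n j ∈ Set.Ioc a b := by
        constructor
        · linarith [hξl, h3, e2, hpos]
        · linarith [hξu, h4, e1, e3]
      have hhm : (x + a) / 2 ∈ Set.Ioc a b := hhalf_mem x hx
      calc ‖f (ξ n j)‖ ≤ M (ξ n j) := hMmaj _ hξmem
        _ ≤ M ((x + a) / 2) := hManti hhm hξmem (le_trans hmid hξl)
        _ = N x := by simp only [hNdef]
    · push_neg at hex
      have hsum : (∑ i ∈ Finset.Icc 2 n, (I n i).indicator (fun _ => f (ξ n i)) x)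
          = 0 := Finset.sum_eq_zero fun i hi => Set.indicator_of_notMem (hex i hi) _
      rw [hsum]
      simpa using hN0 x hx
  -- pointwise convergence of g to f
  have hglim : ∀ᵐ x ∂μ, Tendsto (fun n => g n x) atTop (nhds (f x)) := by
    filter_upwards [hae, ae_restrict_mem measurableSet_Ioc] with x hcont hx
    set J : ℕ → ℕ :=
      fun n => if hh : ∃ j, 1 ≤ j ∧ j ≤ n ∧ x ∈ I n j then hh.choose else 1 with hJdef
    have hJspec : ∀ n, 0 < n → 1 ≤ J n ∧ J n ≤ n ∧ x ∈ I n (J n) := by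
      intro n hn
      have hh := hexists n hn x hx
      simp only [hJdef, dif_pos hh]
      exact hh.choose_spec
    clear_value J
    have hev : ∀ᶠ n : ℕ in atTop, (b - a) / (n:ℝ) < x - a ∧ 2 ≤ n :=
      Eventually.and
        ((tendsto_const_div_atTop_nhds_zero_nat (b - a)).eventually_lt_const
          (sub_pos.2 hx.1))
        (eventually_ge_atTop 2)
    have hkey : ∀ᶠ n : ℕ in atTop, g n x = f (ξ n (J n)) ∧
        x - (b - a) / n ≤ ξ n (J n) ∧ ξ n (J n) ≤ x + (b - a) / n := by
      filter_upwards [hev] with n hn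
      have hn0 : 0 < n := lt_of_lt_of_le (by norm_num) hn.2
      obtain ⟨hJ1, hJn, hxJ⟩ := hJspec n hn0
      have hnR : (0:ℝ) < n := by exact_mod_cast hn0
      have hJ2 : 2 ≤ J n := by
        by_contra hcon
        have h1 : J n = 1 := by omega
        rw [hIeq, h1] at hxJ
        have h2 := hxJ.2
        push_cast at h2
        rw [one_mul] at h2
        have hd : (b - a) / (n:ℝ) < x - a := hn.1
        linarith only [hd, h2]
      rw [hIeq] at hxJ
      have hsum : g n x = f (ξ n (J n)) := by
        simp only [hgdef]
        rw [Finset.sum_eq_single_of_mem (J n) (Finset.mem_Icc.2 ⟨hJ2, hJn⟩)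
          (fun i hi hne =>
            Set.indicator_of_notMem
              (fun hxi => hne (hunique n hn0 x i (J n) hxi (by rw [hIeq]; exact hxJ))) _)]
        exact Set.indicator_of_mem (by rw [hIeq]; exact hxJ) _
      have hξI := hξ n (J n) (Finset.mem_Icc.2 ⟨hJ1, hJn⟩)
      have e := hlen n (J n)
      exact ⟨hsum, by linarith [hξI.1, hxJ.2], by linarith [hξI.2, hxJ.1]⟩
    have hζ : Tendsto (fun n : ℕ => ξ n (J n)) atTop (nhds x) := by
      have h0 := tendsto_const_div_atTop_nhds_zero_nat (b - a)
      have hlow : Tendsto (fun n : ℕ => x - (b - a) / n) atTop (nhds x) := by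
        have h1 := Tendsto.sub
          (tendsto_const_nhds : Tendsto (fun _ : ℕ => x) atTop (nhds x)) h0
        simpa using h1
      have hup : Tendsto (fun n : ℕ => x + (b - a) / n) atTop (nhds x) := by
        have h1 := Tendsto.add
          (tendsto_const_nhds : Tendsto (fun _ : ℕ => x) atTop (nhds x)) h0
        simpa using h1
      exact tendsto_of_tendsto_of_tendsto_of_le_of_le' hlow hup
        (hkey.mono fun n hn => hn.2.1) (hkey.mono fun n hn => hn.2.2)
    exact ((hcont.tendsto.comp hζ).congr' (hkey.mono fun n hn => hn.1.symm))
  -- dominated convergence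
  have hDCT := tendsto_integral_of_dominated_convergence N hgmeas hN_int hgbound hglim
  rw [hL_eq] at hDCT
  have heval : ∀ᶠ n : ℕ in atTop, ∫ x, g n x ∂μ
      = (((b - a) / n : ℝ) : ℂ) * ∑ j ∈ Finset.Icc 2 n, f (ξ n j) := by
    filter_upwards [eventually_ge_atTop 1] with n hn1
    have hnR : (0:ℝ) < n := by exact_mod_cast hn1
    simp only [hgdef]
    rw [MeasureTheory.integral_finset_sum]
    · have hterm : ∀ j ∈ Finset.Icc 2 n,
          (∫ x, (I n j).indicator (fun _ => f (ξ n j)) x ∂μ)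
          = (((b - a) / n : ℝ) : ℂ) * f (ξ n j) := by
        intro j hj
        rw [Finset.mem_Icc] at hj
        rw [hμ, setIntegral_indicator (by rw [hIeq]; exact measurableSet_Ioc)]
        have hss : Set.Ioc a b ∩ I n j = I n j :=
          Set.inter_eq_self_of_subset_right (hsub n j (le_trans one_le_two hj.1) hj.2)
        rw [hss, setIntegral_const, hIeq, Real.volume_real_Ioc, hlen n j,
          max_eq_left (by positivity), Complex.real_smul]
      rw [Finset.sum_congr rfl hterm, ← Finset.mul_sum]
    · intro j _
      apply (integrable_indicator_iff (by rw [hIeq]; exact measurableSet_Ioc)).2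
      apply (integrableOn_const_iff enorm_ne_top).2 (Or.inr _)
      calc μ (I n j) ≤ volume (I n j) := by
            rw [hμ]; exact Measure.restrict_apply_le _ _
        _ < ⊤ := by rw [hIeq]; exact measure_Ioc_lt_top
  exact Tendsto.congr' heval hDCT
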